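/- Let H be a complex Hilbert space and let T : H → H be a bounded self-adjoint operator such that T² − T is a compact operator. Then there exists a bounded operator Q on H which is an orthogonal projection (Q = Q* = Q²) such that Q − T is a compact operator. -/

import Mathlib

open scoped InnerProductSpace

section Aux

variable {H : Type*} [NormedAddCommGroup H] [InnerProductSpace ℂ H] [CompleteSpace H]

lemma approx_eigen (T : H →L[ℂ] H) (hT : IsSelfAdjoint T) {c : ℝ}
    (hc : c ∈ spectrum ℝ T) {ε : ℝ} (hε : 0 < ε) :
    ∃ x : H, ‖x‖ = 1 ∧ ‖T x - c • x‖ < ε := by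
  by_contra hcon
  push_neg at hcon
  set S : H →L[ℂ] H := T - c • 1 with hS
  have hSapp : ∀ x : H, S x = T x - c • x := by
    intro x; simp [hS]
  have hSsa : IsSelfAdjoint S := by
    have h1 : IsSelfAdjoint (c • (1 : H →L[ℂ] H)) := by
      rw [IsSelfAdjoint, star_smul, star_trivial, star_one]
    exact hT.sub h1
  have hbound : ∀ x : H, ε * ‖x‖ ≤ ‖S x‖ := by
    intro x
    rcases eq_or_ne x 0 with rfl | hx
    · simp
    · have hnx : (0:ℝ) < ‖x‖ := norm_pos_iff.mpr hx
      have h1 : ‖(‖x‖⁻¹ • x : H)‖ = 1 := by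
        rw [norm_smul]; simp [abs_of_pos hnx, inv_mul_cancel₀ hnx.ne']
      have h2 := hcon (‖x‖⁻¹ • x) h1
      have h3 : T (‖x‖⁻¹ • x) - c • (‖x‖⁻¹ • x) = ‖x‖⁻¹ • (S x) := by
        rw [hSapp, smul_sub, T.map_smul_of_tower, smul_comm]
      rw [h3, norm_smul] at h2
      simp only [norm_inv, norm_norm] at h2
      calc ε * ‖x‖ ≤ (‖x‖⁻¹ * ‖S x‖) * ‖x‖ := by gcongr
        _ = ‖S x‖ := by field_simp
  have hanti : AntilipschitzWith (⟨ε, hε.le⟩ : NNReal)⁻¹ S := by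
    refine ContinuousLinearMap.antilipschitz_of_bound S fun x => ?_
    have := hbound x
    calc ‖x‖ = ε⁻¹ * (ε * ‖x‖) := by field_simp
      _ ≤ ε⁻¹ * ‖S x‖ := by gcongr
      _ = _ := rfl
  have hUnit : IsUnit S := by
    rw [ContinuousLinearMap.isUnit_iff_bijective,
      ContinuousLinearMap.bijective_iff_dense_range_and_antilipschitz]
    refine ⟨?_, ⟨_, hanti⟩⟩
    rw [Submodule.topologicalClosure_eq_top_iff, Submodule.eq_bot_iff]
    intro x hx
    rw [Submodule.mem_orthogonal] at hx
    have h0 : ⟪S (S x), x⟫_ℂ = 0 := hx _ ⟨S x, rfl⟩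
    have hsymm := hSsa.isSymmetric
    have h1 : ⟪S (S x), x⟫_ℂ = ⟪S x, S x⟫_ℂ := hsymm (S x) x
    have h2 : S x = 0 := by
      rw [h1] at h0
      exact inner_self_eq_zero.mp h0
    have hb := hbound x
    rw [h2, norm_zero] at hb
    have hx0 : ‖x‖ ≤ 0 := by nlinarith [norm_nonneg x]
    exact norm_le_zero_iff.mp hx0
  have : IsUnit (algebraMap ℝ (H →L[ℂ] H) c - T) := by
    have : algebraMap ℝ (H →L[ℂ] H) c - T = -S := by
      rw [hS, Algebra.algebraMap_eq_smul_one]; abel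
    rw [this]
    exact hUnit.neg
  exact (spectrum.mem_iff.mp hc) this

lemma inner_real_smul_left' (r : ℝ) (x y : H) : ⟪r • x, y⟫_ℂ = (r : ℂ) * ⟪x, y⟫_ℂ := by
  rw [RCLike.real_smul_eq_coe_smul (K := ℂ) r x, inner_smul_left]
  simp [Complex.conj_ofReal]

lemma inner_real_smul_right' (r : ℝ) (x y : H) : ⟪x, r • y⟫_ℂ = (r : ℂ) * ⟪x, y⟫_ℂ := by
  rw [RCLike.real_smul_eq_coe_smul (K := ℂ) r y, inner_smul_right]
  norm_cast


set_option maxHeartbeats 1600000 in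
lemma exists_gap (T : H →L[ℂ] H) (hT : IsSelfAdjoint T)
    (hcpt : IsCompactOperator ⇑(T ^ 2 - T)) :
    ∃ c : ℝ, 0 < c ∧ c < 1 ∧ c ∉ spectrum ℝ T := by
  by_contra hcon
  push_neg at hcon
  set K : H →L[ℂ] H := T ^ 2 - T with hK
  obtain ⟨η, hη⟩ : ∃ η : ℝ, η = 1 / (20 * (‖T‖ + 1)) := ⟨_, rfl⟩
  obtain ⟨c, hcdef⟩ : ∃ c : ℕ → ℝ, c = fun n => 1 / 2 - (1/4 : ℝ) ^ (n + 2) := ⟨_, rfl⟩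
  obtain ⟨ε, hεdef⟩ : ∃ ε : ℕ → ℝ, ε = fun n => η * (1/4 : ℝ) ^ (n + 3) := ⟨_, rfl⟩
  have hTnorm : (0:ℝ) < ‖T‖ + 1 := by positivity
  have hηpos : 0 < η := by rw [hη]; positivity
  have hη20 : η ≤ 1 / 20 := by
    rw [hη, div_le_div_iff₀ (by positivity) (by norm_num)]
    nlinarith [norm_nonneg T]
  have hpow_pos : ∀ m : ℕ, (0:ℝ) < (1/4 : ℝ) ^ m := fun m => by positivity
  have hc_mem : ∀ n, 7/16 ≤ c n ∧ c n < 1/2 := by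
    intro n
    have h1 : ((1:ℝ)/4) ^ (n + 2) ≤ (1/4 : ℝ) ^ 2 :=
      pow_le_pow_of_le_one (by norm_num) (by norm_num) (by omega)
    have h2 := hpow_pos (n + 2)
    rw [hcdef]
    norm_num at h1
    constructor
    · simp only; nlinarith
    · simp only; nlinarith
  have hεpos : ∀ n, 0 < ε n := fun n => by rw [hεdef]; positivity
  have hgap : ∀ i j : ℕ, i < j → (3/4) * (1/4:ℝ) ^ (i + 2) ≤ c j - c i := by
    intro i j hij
    have h1 : ((1:ℝ)/4) ^ (j + 2) ≤ (1/4 : ℝ) ^ (i + 3) :=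
      pow_le_pow_of_le_one (by norm_num) (by norm_num) (by omega)
    have h2 : ((1:ℝ)/4) ^ (i + 3) = (1/4) * (1/4:ℝ) ^ (i + 2) := by ring
    rw [hcdef]
    simp only
    nlinarith [hpow_pos (i + 2)]
  have hεbound : ∀ i j : ℕ, i ≤ j → ε i + ε j ≤ (η / 2) * (1/4:ℝ) ^ (i + 2) := by
    intro i j hij
    have h1 : ((1:ℝ)/4) ^ (j + 3) ≤ (1/4 : ℝ) ^ (i + 3) :=
      pow_le_pow_of_le_one (by norm_num) (by norm_num) (by omega)
    have h2 : ((1:ℝ)/4) ^ (i + 3) = (1/4) * (1/4:ℝ) ^ (i + 2) := by ring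
    rw [hεdef]
    simp only
    nlinarith [hpow_pos (i + 2)]
  have hε64 : ∀ i j : ℕ, ε i + ε j ≤ 2 * η * (1/64 : ℝ) := by
    intro i j
    have h1 : ((1:ℝ)/4) ^ (i + 3) ≤ (1/4 : ℝ) ^ 3 :=
      pow_le_pow_of_le_one (by norm_num) (by norm_num) (by omega)
    have h2 : ((1:ℝ)/4) ^ (j + 3) ≤ (1/4 : ℝ) ^ 3 :=
      pow_le_pow_of_le_one (by norm_num) (by norm_num) (by omega)
    rw [hεdef]
    simp only
    nlinarith
  have hspec : ∀ n, c n ∈ spectrum ℝ T := by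
    intro n
    obtain ⟨hn1, hn2⟩ := hc_mem n
    exact hcon _ (by linarith) (by linarith)
  choose x hx1 hx2 using fun n => approx_eigen T hT (hspec n) (hεpos n)
  obtain ⟨e, hedef⟩ : ∃ e : ℕ → H, e = fun n => T (x n) - c n • x n := ⟨_, rfl⟩
  have hx2' : ∀ n, ‖e n‖ ≤ ε n := fun n => by rw [hedef]; exact (hx2 n).le
  -- inner product bound
  have key : ∀ i j, ((c j - c i : ℝ) : ℂ) * ⟪x i, x j⟫_ℂ = ⟪e i, x j⟫_ℂ - ⟪x i, e j⟫_ℂ := by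
    intro i j
    have h1 : ⟪T (x i), x j⟫_ℂ = ⟪x i, T (x j)⟫_ℂ := hT.isSymmetric _ _
    rw [hedef]
    simp only [inner_sub_left, inner_sub_right, inner_real_smul_left', inner_real_smul_right', h1]
    push_cast
    ring
  have hinner : ∀ i j : ℕ, i < j → ‖⟪x i, x j⟫_ℂ‖ ≤ 1/30 := by
    intro i j hij
    have hgapij := hgap i j hij
    have hgap_pos : (0:ℝ) < c j - c i := lt_of_lt_of_le (by positivity) hgapij
    have hnorm_eq : ‖((c j - c i : ℝ) : ℂ) * ⟪x i, x j⟫_ℂ‖ = (c j - c i) * ‖⟪x i, x j⟫_ℂ‖ := by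
      rw [norm_mul, Complex.norm_real, Real.norm_eq_abs, abs_of_pos hgap_pos]
    have hrhs : ‖⟪e i, x j⟫_ℂ - ⟪x i, e j⟫_ℂ‖ ≤ ε i + ε j := by
      refine (norm_sub_le _ _).trans ?_
      have b1 : ‖⟪e i, x j⟫_ℂ‖ ≤ ε i := by
        refine (norm_inner_le_norm _ _).trans ?_
        rw [hx1 j, mul_one]; exact hx2' i
      have b2 : ‖⟪x i, e j⟫_ℂ‖ ≤ ε j := by
        refine (norm_inner_le_norm _ _).trans ?_
        rw [hx1 i, one_mul]; exact hx2' j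
      linarith
    have hmain : (c j - c i) * ‖⟪x i, x j⟫_ℂ‖ ≤ ε i + ε j := by
      rw [← hnorm_eq, key i j]; exact hrhs
    have hsum := hεbound i j hij.le
    have h30 : (η / 2) * (1/4:ℝ) ^ (i + 2) ≤ (2 * η / 3) * (c j - c i) := by
      nlinarith [hpow_pos (i + 2)]
    have hfinal : (c j - c i) * ‖⟪x i, x j⟫_ℂ‖ ≤ (2 * η / 3) * (c j - c i) := by linarith
    have : ‖⟪x i, x j⟫_ℂ‖ ≤ 2 * η / 3 := by
      rw [mul_comm] at hfinal
      exact le_of_mul_le_mul_right hfinal hgap_pos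
    linarith
  -- K x n close to a n • x n
  obtain ⟨a, hadef⟩ : ∃ a : ℕ → ℝ, a = fun n => c n ^ 2 - c n := ⟨_, rfl⟩
  have ha_bound : ∀ n, 63/256 ≤ -(a n) ∧ -(a n) ≤ 1/4 := by
    intro n
    obtain ⟨h1, h2⟩ := hc_mem n
    rw [hadef]
    constructor <;> simp only <;> nlinarith
  have hKa : ∀ n, ‖K (x n) - a n • x n‖ ≤ (‖T‖ + 1) * ε n := by
    intro n
    have hid : K (x n) - a n • x n = T (e n) + (c n - 1) • e n := by
      have hTe : T (e n) = T (T (x n)) - c n • T (x n) := by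
        rw [hedef]; simp only [map_sub, T.map_smul_of_tower]
      have hKx : K (x n) = T (T (x n)) - T (x n) := by
        rw [hK]
        simp only [ContinuousLinearMap.sub_apply, pow_two, ContinuousLinearMap.mul_apply]
      rw [hKx, hTe, hedef, hadef]
      simp only
      module
    rw [hid]
    have h1 : ‖T (e n) + (c n - 1) • e n‖ ≤ ‖T (e n)‖ + ‖(c n - 1) • e n‖ := norm_add_le _ _
    have h2 : ‖T (e n)‖ ≤ ‖T‖ * ‖e n‖ := T.le_opNorm _
    have h3 : ‖(c n - 1) • e n‖ = |c n - 1| * ‖e n‖ := by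
      rw [norm_smul, Real.norm_eq_abs]
    have h4 : |c n - 1| ≤ 1 := by
      obtain ⟨hm1, hm2⟩ := hc_mem n
      rw [abs_le]; constructor <;> linarith
    have h5 : ‖e n‖ ≤ ε n := hx2' n
    have h6 : (0:ℝ) ≤ ‖e n‖ := norm_nonneg _
    nlinarith [norm_nonneg T, hεpos n]
  -- lower bound on ‖K x i - K x j‖
  have hlow : ∀ i j : ℕ, i < j → (1:ℝ)/5 ≤ ‖K (x i) - K (x j)‖ := by
    intro i j hij
    have hsep : (23:ℝ)/100 ≤ ‖a i • x i - a j • x j‖ := by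
      obtain ⟨hai1, hai2⟩ := ha_bound i
      obtain ⟨haj1, haj2⟩ := ha_bound j
      have hni : ‖a i • x i‖ = -(a i) := by
        rw [norm_smul, Real.norm_eq_abs, hx1 i, mul_one, abs_of_neg (by linarith)]
      have hinn : ‖⟪a i • x i, a j • x j⟫_ℂ‖ ≤ 1/480 := by
        rw [inner_real_smul_left', inner_real_smul_right', ← mul_assoc, ← Complex.ofReal_mul,
          norm_mul, Complex.norm_real, Real.norm_eq_abs, abs_of_pos (by nlinarith)]
        have h3 := hinner i j hij
        have h4 : (0:ℝ) ≤ ‖⟪x i, x j⟫_ℂ‖ := norm_nonneg _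
        have h5 : a i * a j ≤ 1/16 := by nlinarith
        calc a i * a j * ‖⟪x i, x j⟫_ℂ‖ ≤ (1/16) * (1/30) :=
              mul_le_mul h5 h3 h4 (by norm_num)
          _ ≤ 1/480 := by norm_num
      have hCS : ‖⟪a i • x i, a i • x i - a j • x j⟫_ℂ‖ ≤
          ‖a i • x i‖ * ‖a i • x i - a j • x j‖ := norm_inner_le_norm _ _
      have hexp : ⟪a i • x i, a i • x i - a j • x j⟫_ℂ =
          ⟪a i • x i, a i • x i⟫_ℂ - ⟪a i • x i, a j • x j⟫_ℂ := inner_sub_right _ _ _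
      have hself : ⟪a i • x i, a i • x i⟫_ℂ = ((‖a i • x i‖ ^ 2 : ℝ) : ℂ) := by
        rw [inner_self_eq_norm_sq_to_K]; norm_cast
      have hlb : ‖a i • x i‖ ^ 2 - 1/480 ≤ ‖a i • x i‖ * ‖a i • x i - a j • x j‖ := by
        refine le_trans ?_ hCS
        rw [hexp, hself]
        have := norm_sub_norm_le (((‖a i • x i‖ ^ 2 : ℝ) : ℂ)) (⟪a i • x i, a j • x j⟫_ℂ)
        rw [Complex.norm_real, Real.norm_eq_abs, abs_of_nonneg (by positivity)] at this
        linarith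
      rw [hni] at hlb
      have hnn : (0:ℝ) ≤ ‖a i • x i - a j • x j‖ := norm_nonneg _
      nlinarith
    have ht1 := hKa i
    have ht2 := hKa j
    have hεb := hε64 i j
    have htri : ‖a i • x i - a j • x j‖ ≤
        ‖K (x i) - a i • x i‖ + ‖K (x i) - K (x j)‖ + ‖K (x j) - a j • x j‖ := by
      have : a i • x i - a j • x j =
          -(K (x i) - a i • x i) + (K (x i) - K (x j)) + (K (x j) - a j • x j) := by abel
      rw [this]
      refine (norm_add_le _ _).trans ?_
      gcongr
      refine (norm_add_le _ _).trans ?_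
      gcongr
      rw [norm_neg]
    have hTη : (‖T‖ + 1) * (ε i + ε j) ≤ 1/100 := by
      have hprod : (‖T‖ + 1) * η = 1/20 := by
        rw [hη]; field_simp
      have h64 := hε64 i j
      have : (‖T‖ + 1) * (ε i + ε j) ≤ (‖T‖ + 1) * (2 * η * (1/64)) := by
        gcongr
      nlinarith
    nlinarith
  -- compactness contradiction
  obtain ⟨M, hMcomp, hMnhds⟩ := hcpt
  obtain ⟨r, hr, hball⟩ := Metric.mem_nhds_iff.mp hMnhds
  have hy : ∀ n, K ((r/2) • x n) ∈ M := by
    intro n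
    apply hball
    rw [Metric.mem_ball, dist_zero_right, norm_smul, Real.norm_eq_abs, hx1 n, mul_one,
      abs_of_pos (by linarith)]
    linarith
  obtain ⟨z, hzM, φ, hφ, hconv⟩ := hMcomp.tendsto_subseq (x := fun n => K ((r/2) • x n)) hy
  obtain ⟨N, hN⟩ := Metric.tendsto_atTop.mp hconv ((r/2) * (1/10)) (by positivity)
  have h1 := hN N le_rfl
  have h2 := hN (N + 1) (by omega)
  have hφlt : φ N < φ (N + 1) := hφ (by omega)
  have hdist : dist (K ((r/2) • x (φ N))) (K ((r/2) • x (φ (N+1)))) < (r/2) * (1/5) := by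
    have := dist_triangle (K ((r/2) • x (φ N))) z (K ((r/2) • x (φ (N+1))))
    rw [dist_comm z _] at this
    calc dist (K ((r/2) • x (φ N))) (K ((r/2) • x (φ (N+1))))
        ≤ _ + _ := this
      _ < (r/2) * (1/10) + (r/2) * (1/10) := by exact add_lt_add h1 h2
      _ = (r/2) * (1/5) := by ring
  have heq : dist (K ((r/2) • x (φ N))) (K ((r/2) • x (φ (N+1)))) =
      (r/2) * ‖K (x (φ N)) - K (x (φ (N+1)))‖ := by
    rw [dist_eq_norm, K.map_smul_of_tower, K.map_smul_of_tower, ← smul_sub, norm_smul,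
      Real.norm_eq_abs, abs_of_pos (by linarith)]
  rw [heq] at hdist
  have := hlow (φ N) (φ (N+1)) hφlt
  nlinarith

end Aux

/-- Let `H` be a complex Hilbert space and `T` a bounded self-adjoint operator on `H`
such that `T² − T` is compact.  Then there is a bounded operator `Q` on `H` which is
an orthogonal projection (`Q = Q* = Q²`) such that `Q − T` is compact. -/
theorem exists_projection_compact_perturbation
    {H : Type*} [NormedAddCommGroup H] [InnerProductSpace ℂ H] [CompleteSpace H]
    (T : H →L[ℂ] H) (hT : IsSelfAdjoint T)
    (hcpt : IsCompactOperator ⇑(T ^ 2 - T)) :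
    ∃ Q : H →L[ℂ] H, IsSelfAdjoint Q ∧ Q ^ 2 = Q ∧ IsCompactOperator ⇑(Q - T) := by
  classical
  obtain ⟨c, hc0, hc1, hc⟩ := exists_gap T hT hcpt
  set χ : ℝ → ℝ := fun x => if x < c then 0 else 1 with hχdef
  set g : ℝ → ℝ := fun x => if x < c then (1 - x)⁻¹ else -x⁻¹ with hgdef
  have hχcont : ContinuousOn χ (spectrum ℝ T) := by
    intro y hy
    have hyc : y ≠ c := fun h => hc (h ▸ hy)
    apply ContinuousAt.continuousWithinAt
    rcases lt_or_gt_of_ne hyc with h | h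
    · have hev : χ =ᶠ[nhds y] fun _ => (0:ℝ) := by
        filter_upwards [Iio_mem_nhds h] with z hz
        simp only [hχdef]
        rw [if_pos (Set.mem_Iio.mp hz)]
      exact continuousAt_const.congr_of_eventuallyEq hev
    · have hev : χ =ᶠ[nhds y] fun _ => (1:ℝ) := by
        filter_upwards [Ioi_mem_nhds h] with z hz
        simp only [hχdef]
        rw [if_neg (not_lt.mpr (le_of_lt (Set.mem_Ioi.mp hz)))]
      exact continuousAt_const.congr_of_eventuallyEq hev
  have hgcont : ContinuousOn g (spectrum ℝ T) := by
    intro y hy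
    have hyc : y ≠ c := fun h => hc (h ▸ hy)
    apply ContinuousAt.continuousWithinAt
    rcases lt_or_gt_of_ne hyc with h | h
    · have hev : g =ᶠ[nhds y] fun z => (1 - z)⁻¹ := by
        filter_upwards [Iio_mem_nhds h] with z hz
        simp only [hgdef]
        rw [if_pos (Set.mem_Iio.mp hz)]
      have hbase : ContinuousAt (fun z : ℝ => (1 - z)⁻¹) y := by
        apply ContinuousAt.inv₀
        · exact (continuous_const.sub continuous_id).continuousAt
        · have : y < 1 := lt_trans h hc1
          intro habs; linarith [sub_eq_zero.mp habs]
      exact hbase.congr_of_eventuallyEq hev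
    · have hev : g =ᶠ[nhds y] fun z => -z⁻¹ := by
        filter_upwards [Ioi_mem_nhds h] with z hz
        simp only [hgdef]
        rw [if_neg (not_lt.mpr (le_of_lt (Set.mem_Ioi.mp hz)))]
      have hy0 : y ≠ 0 := by
        have : 0 < y := lt_trans hc0 h
        linarith
      have hbase : ContinuousAt (fun z : ℝ => -z⁻¹) y :=
        (continuousAt_id.inv₀ hy0).neg
      exact hbase.congr_of_eventuallyEq hev
  refine ⟨cfc χ T, cfc_predicate χ T, ?_, ?_⟩
  · rw [← cfc_pow χ 2 T hχcont]
    apply cfc_congr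
    intro y _
    simp only [hχdef]
    by_cases h : y < c <;> simp [h]
  · have hrepr : (fun y : ℝ => χ y - y) = fun y => g y * (y ^ 2 - y) := by
      funext y
      simp only [hχdef, hgdef]
      by_cases h : y < c
      · rw [if_pos h, if_pos h]
        have h1 : (1:ℝ) - y ≠ 0 := by
          have : y < 1 := lt_trans h hc1
          intro habs; linarith [sub_eq_zero.mp habs]
        field_simp
        ring
      · rw [if_neg h, if_neg h]
        have h0 : y ≠ 0 := by
          push_neg at h
          have : 0 < y := lt_of_lt_of_le hc0 h
          linarith
        field_simp
        ring
    have e1 : cfc χ T - T = cfc (fun y : ℝ => χ y - y) T := by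
      rw [cfc_sub χ (fun y : ℝ => y) T hχcont (by fun_prop), cfc_id' ℝ T hT]
    have e2 : cfc (fun y : ℝ => χ y - y) T = cfc g T * (T ^ 2 - T) := by
      rw [hrepr, cfc_mul g (fun y : ℝ => y ^ 2 - y) T hgcont (by fun_prop),
        cfc_sub (fun y : ℝ => y ^ 2) (fun y : ℝ => y) T (by fun_prop) (by fun_prop),
        cfc_pow_id T 2 hT, cfc_id' ℝ T hT]
    rw [e1, e2]
    show IsCompactOperator (⇑(cfc g T) ∘ ⇑(T ^ 2 - T))
    exact hcpt.continuous_comp (cfc g T).continuous
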